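/- Let $\ell$ be a vector loss function on $\mathbb{R}^m$ with componentwise loss functions $\ell_1, \dots, \ell_m$, let $x^0 \in \mathrm{int}\,\ell(\mathrm{dom}\,\ell)$, and let $C \subseteq \mathbb{R}^m$ be closed convex with $C + \mathbb{R}^m_+ \subseteq C$ and $0$ a boundary point of $C$. Define $R_\ell(X) = \{z \in \mathbb{R}^m \mid \mathbb{E}[\ell(-X - z)] \in x^0 - C\}$ for $X \in L^\infty_m$. Then $R_\ell$ is convex in the set-valued sense: for all $X, Y \in L^\infty_m$ and $\lambda \in (0,1)$, $R_\ell(\lambda X + (1-\lambda) Y) \supseteq \lambda R_\ell(X) + (1-\lambda) R_\ell(Y)$. -/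

import Mathlib

open MeasureTheory Set Filter
open scoped Pointwise

noncomputable section

/-- Legendre-Fenchel conjugate of an `ℝ ∪ {+∞}`-valued function on `ℝ`. -/
def fconj (f : ℝ → EReal) (y : ℝ) : EReal := ⨆ x : ℝ, ((x * y : ℝ) : EReal) - f x

/-- Convexity for an `ℝ ∪ {+∞}`-valued function on `ℝ`. -/
def ERealConvexOn (f : ℝ → EReal) : Prop :=
  ∀ x y a b : ℝ, 0 ≤ a → 0 ≤ b → a + b = 1 →
    f (a * x + b * y) ≤ (a : EReal) * f x + (b : EReal) * f y

/-- A loss function: nondecreasing, convex, lower semicontinuous, finite at `0`,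
not identically constant on its effective domain, with values in `ℝ ∪ {+∞}`. -/
structure IsLossFunction (f : ℝ → EReal) : Prop where
  ne_bot : ∀ x, f x ≠ ⊥
  mono : Monotone f
  convex : ERealConvexOn f
  lsc : LowerSemicontinuous f
  finite_at_zero : f 0 ≠ ⊤
  nonconst : ∃ x y, f x ≠ ⊤ ∧ f y ≠ ⊤ ∧ f x ≠ f y

open Classical in
/-- Expectation of an `ℝ ∪ {+∞}`-valued random variable: the integral if the variable is
(a.e. finite and) integrable, and `+∞` otherwise. -/
def eexp {Ω : Type*} [MeasurableSpace Ω] (μ : Measure Ω) (g : Ω → EReal) : EReal :=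
  if Integrable (fun ω => (g ω).toReal) μ ∧ (∀ᵐ ω ∂μ, g ω ≠ ⊤) then
    ((∫ ω, (g ω).toReal ∂μ : ℝ) : EReal) else ⊤


/-- The set-valued shortfall risk measure
`R_ℓ(X) = {z ∈ ℝ^m | E[ℓ(-X-z)] ∈ x⁰ - C}`, where the (componentwise) expected loss
is required to be finite. -/
def Rsf {Ω : Type*} [MeasurableSpace Ω] (μ : Measure Ω) {m : ℕ} (ℓ : Fin m → ℝ → EReal)
    (x0 : Fin m → ℝ) (C : Set (Fin m → ℝ)) (X : Ω → Fin m → ℝ) : Set (Fin m → ℝ) :=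
  {z | ∃ e : Fin m → ℝ,
    (∀ i, eexp μ (fun ω => ℓ i (-(X ω i) - z i)) = (e i : EReal)) ∧ x0 - e ∈ C}



private lemma eexp_spec {Ω : Type*} [MeasurableSpace Ω] {μ : Measure Ω} {g : Ω → EReal} {e : ℝ}
    (h : eexp μ g = (e : EReal)) :
    Integrable (fun ω => (g ω).toReal) μ ∧ (∀ᵐ ω ∂μ, g ω ≠ ⊤) ∧
      (∫ ω, (g ω).toReal ∂μ) = e := by
  unfold eexp at h
  split_ifs at h with hc
  · exact ⟨hc.1, hc.2, by exact_mod_cast h⟩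
  · exact absurd h.symm (EReal.coe_ne_top e)

private lemma eexp_eq {Ω : Type*} [MeasurableSpace Ω] {μ : Measure Ω} {g : Ω → EReal}
    (h1 : Integrable (fun ω => (g ω).toReal) μ) (h2 : ∀ᵐ ω ∂μ, g ω ≠ ⊤) :
    eexp μ g = ((∫ ω, (g ω).toReal ∂μ : ℝ) : EReal) := by
  unfold eexp
  rw [if_pos ⟨h1, h2⟩]

/-- The set-valued shortfall risk measure is convex:
`R_ℓ(a X + (1-a) Y) ⊇ a R_ℓ(X) + (1-a) R_ℓ(Y)` for `a ∈ (0,1)`. -/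
theorem set_valued_shortfall_convex {Ω : Type*} [MeasurableSpace Ω]
    (μ : Measure Ω) [IsProbabilityMeasure μ] (m : ℕ)
    (ℓ : Fin m → ℝ → EReal) (hℓ : ∀ i, IsLossFunction (ℓ i))
    (x0 : Fin m → ℝ) (hx0 : ∀ i, ((x0 i : ℝ) : EReal) ∈ interior (Set.range (ℓ i)))
    (C : Set (Fin m → ℝ)) (hCcl : IsClosed C) (hCco : Convex ℝ C)
    (hCup : C + {p : Fin m → ℝ | ∀ i, 0 ≤ p i} ⊆ C)
    (h0C : (0 : Fin m → ℝ) ∈ frontier C)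
    (X Y : Ω → Fin m → ℝ) (hX : Measurable X) (hY : Measurable Y)
    (hXb : ∃ K, ∀ᵐ ω ∂μ, ‖X ω‖ ≤ K) (hYb : ∃ K, ∀ᵐ ω ∂μ, ‖Y ω‖ ≤ K)
    (a : ℝ) (ha : a ∈ Set.Ioo (0 : ℝ) 1) :
    a • Rsf μ ℓ x0 C X + (1 - a) • Rsf μ ℓ x0 C Y ⊆
      Rsf μ ℓ x0 C (fun ω => a • X ω + (1 - a) • Y ω) := by
  haveI : NeZero μ := ⟨IsProbabilityMeasure.ne_zero μ⟩
  rintro z hz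
  rw [Set.mem_add] at hz
  obtain ⟨u, hu, v, hv, rfl⟩ := hz
  obtain ⟨zX, hzX, rfl⟩ := hu
  obtain ⟨zY, hzY, rfl⟩ := hv
  obtain ⟨eX, heX, hCX⟩ := hzX
  obtain ⟨eY, heY, hCY⟩ := hzY
  obtain ⟨KX, hKX⟩ := hXb
  obtain ⟨KY, hKY⟩ := hYb
  obtain ⟨ha0, ha1⟩ := ha
  set b : ℝ := 1 - a with hbdef
  have hb0 : 0 < b := by simp [hbdef]; linarith
  have hab : a + b = 1 := by simp [hbdef]
  -- the arguments of the losses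
  set uX : Fin m → Ω → ℝ := fun i ω => -(X ω i) - zX i with huX
  set uY : Fin m → Ω → ℝ := fun i ω => -(Y ω i) - zY i with huY
  set g : Fin m → Ω → ℝ := fun i ω => a * uX i ω + b * uY i ω with hg
  set M : ℝ := (|KX| + ‖zX‖) + (|KY| + ‖zY‖) with hM
  have key : ∀ i, Integrable (fun ω => (ℓ i (g i ω)).toReal) μ ∧
      (∀ᵐ ω ∂μ, ℓ i (g i ω) ≠ ⊤) ∧
      (∫ ω, (ℓ i (g i ω)).toReal ∂μ) ≤ a * eX i + b * eY i := by
    intro i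
    obtain ⟨hIX, hTX, hEX⟩ := eexp_spec (heX i)
    obtain ⟨hIY, hTY, hEY⟩ := eexp_spec (heY i)
    -- step A : a.e. pointwise bounds in `EReal`
    have stepA : ∀ᵐ ω ∂μ, ℓ i (g i ω) ≤
        ((a * (ℓ i (uX i ω)).toReal + b * (ℓ i (uY i ω)).toReal : ℝ) : EReal) ∧
        ℓ i (-M) ≤ ℓ i (g i ω) := by
      filter_upwards [hKX, hKY, hTX, hTY] with ω h1 h2 h3 h4
      have hX1 : |X ω i| ≤ |KX| := by
        calc |X ω i| = ‖X ω i‖ := (Real.norm_eq_abs _).symm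
        _ ≤ ‖X ω‖ := norm_le_pi_norm (X ω) i
        _ ≤ KX := h1
        _ ≤ |KX| := le_abs_self KX
      have hY1 : |Y ω i| ≤ |KY| := by
        calc |Y ω i| = ‖Y ω i‖ := (Real.norm_eq_abs _).symm
        _ ≤ ‖Y ω‖ := norm_le_pi_norm (Y ω) i
        _ ≤ KY := h2
        _ ≤ |KY| := le_abs_self KY
      have hzX1 : |zX i| ≤ ‖zX‖ := by
        rw [← Real.norm_eq_abs]; exact norm_le_pi_norm zX i
      have hzY1 : |zY i| ≤ ‖zY‖ := by
        rw [← Real.norm_eq_abs]; exact norm_le_pi_norm zY i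
      have huXb : |uX i ω| ≤ |KX| + ‖zX‖ := by
        simp only [huX]
        calc |-(X ω i) - zX i| ≤ |X ω i| + |zX i| := by
              have := abs_sub (-(X ω i)) (zX i); simpa [abs_neg] using this
        _ ≤ |KX| + ‖zX‖ := add_le_add hX1 hzX1
      have huYb : |uY i ω| ≤ |KY| + ‖zY‖ := by
        simp only [huY]
        calc |-(Y ω i) - zY i| ≤ |Y ω i| + |zY i| := by
              have := abs_sub (-(Y ω i)) (zY i); simpa [abs_neg] using this
        _ ≤ |KY| + ‖zY‖ := add_le_add hY1 hzY1
      have hgeM : -M ≤ g i ω := by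
        have e1 := (abs_le.mp huXb).1
        have e2 := (abs_le.mp huYb).1
        have p1 : -(a * (|KX| + ‖zX‖)) ≤ a * uX i ω := by nlinarith
        have p2 : -(b * (|KY| + ‖zY‖)) ≤ b * uY i ω := by nlinarith
        have q1 : a * (|KX| + ‖zX‖) ≤ |KX| + ‖zX‖ := by
          have hpos : (0:ℝ) ≤ |KX| + ‖zX‖ := by positivity
          nlinarith
        have q2 : b * (|KY| + ‖zY‖) ≤ |KY| + ‖zY‖ := by
          have hpos : (0:ℝ) ≤ |KY| + ‖zY‖ := by positivity
          nlinarith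
        simp only [hg, hM]
        linarith
      have hconv : ℓ i (g i ω) ≤ (a : EReal) * ℓ i (uX i ω) + (b : EReal) * ℓ i (uY i ω) :=
        (hℓ i).convex (uX i ω) (uY i ω) a b ha0.le hb0.le hab
      have hx : ℓ i (uX i ω) = (((ℓ i (uX i ω)).toReal : ℝ) : EReal) :=
        (EReal.coe_toReal h3 ((hℓ i).ne_bot _)).symm
      have hy : ℓ i (uY i ω) = (((ℓ i (uY i ω)).toReal : ℝ) : EReal) :=
        (EReal.coe_toReal h4 ((hℓ i).ne_bot _)).symm
      constructor
      · calc ℓ i (g i ω) ≤ (a : EReal) * ℓ i (uX i ω) + (b : EReal) * ℓ i (uY i ω) := hconv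
        _ = ((a * (ℓ i (uX i ω)).toReal + b * (ℓ i (uY i ω)).toReal : ℝ) : EReal) := by
            rw [hx, hy]; push_cast; rfl
      · exact (hℓ i).mono hgeM
    -- `ℓ i (-M)` is finite
    obtain ⟨ω0, hω0⟩ := stepA.exists
    have hMne_top : ℓ i (-M) ≠ ⊤ := by
      intro htop
      have := hω0.2
      rw [htop] at this
      have h2 := le_trans this hω0.1
      exact absurd (top_le_iff.mp h2) (EReal.coe_ne_top _)
    set c : ℝ := (ℓ i (-M)).toReal with hc
    have hcoe : ℓ i (-M) = (c : EReal) := (EReal.coe_toReal hMne_top ((hℓ i).ne_bot _)).symm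
    -- step C : a.e. bounds on `toReal`
    have stepC : ∀ᵐ ω ∂μ, ℓ i (g i ω) ≠ ⊤ ∧
        c ≤ (ℓ i (g i ω)).toReal ∧
        (ℓ i (g i ω)).toReal ≤ a * (ℓ i (uX i ω)).toReal + b * (ℓ i (uY i ω)).toReal := by
      filter_upwards [stepA] with ω hω
      have hne_top : ℓ i (g i ω) ≠ ⊤ := by
        intro htop
        rw [htop] at hω
        exact absurd (top_le_iff.mp hω.1) (EReal.coe_ne_top _)
      refine ⟨hne_top, ?_, ?_⟩
      · have := hω.2
        rw [hcoe] at this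
        have h1 : ((c : ℝ) : EReal).toReal ≤ (ℓ i (g i ω)).toReal :=
          EReal.toReal_le_toReal this (EReal.coe_ne_bot _) hne_top
        simpa using h1
      · have h1 := EReal.toReal_le_toReal hω.1 ((hℓ i).ne_bot _) (EReal.coe_ne_top _)
        simpa only [EReal.toReal_coe] using h1
    -- measurability
    have hgm : Measurable (fun ω => g i ω) := by
      simp only [hg, huX, huY]
      exact (((measurable_pi_apply i).comp hX).neg.sub measurable_const).const_mul a
        |>.add ((((measurable_pi_apply i).comp hY).neg.sub measurable_const).const_mul b)
    have hmeas : Measurable (fun ω => (ℓ i (g i ω)).toReal) :=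
      measurable_ereal_toReal.comp (((hℓ i).lsc.measurable).comp hgm)
    -- integrability
    have hGint : Integrable
        (fun ω => |c| + |a * (ℓ i (uX i ω)).toReal + b * (ℓ i (uY i ω)).toReal|) μ :=
      (integrable_const _).add ((hIX.const_mul a).add (hIY.const_mul b)).abs
    have hint : Integrable (fun ω => (ℓ i (g i ω)).toReal) μ := by
      refine Integrable.mono' hGint hmeas.aestronglyMeasurable ?_
      filter_upwards [stepC] with ω hω
      rw [Real.norm_eq_abs, abs_le]
      constructor
      · have := hω.2.1
        have h2 := neg_abs_le c
        have h3 := abs_nonneg (a * (ℓ i (uX i ω)).toReal + b * (ℓ i (uY i ω)).toReal)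
        linarith
      · have := hω.2.2
        have h2 := le_abs_self (a * (ℓ i (uX i ω)).toReal + b * (ℓ i (uY i ω)).toReal)
        have h3 := abs_nonneg c
        linarith
    refine ⟨hint, stepC.mono (fun ω hω => hω.1), ?_⟩
    have hle : (∫ ω, (ℓ i (g i ω)).toReal ∂μ) ≤
        ∫ ω, a * (ℓ i (uX i ω)).toReal + b * (ℓ i (uY i ω)).toReal ∂μ :=
      integral_mono_ae hint ((hIX.const_mul a).add (hIY.const_mul b))
        (stepC.mono (fun ω hω => hω.2.2))
    rw [integral_add (hIX.const_mul a) (hIY.const_mul b), integral_const_mul,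
      integral_const_mul, hEX, hEY] at hle
    exact hle
  -- assemble
  refine ⟨fun i => ∫ ω, (ℓ i (g i ω)).toReal ∂μ, fun i => ?_, ?_⟩
  · have hfun : (fun ω => ℓ i (-((fun ω => a • X ω + b • Y ω) ω i) - (a • zX + b • zY) i)) =
        fun ω => ℓ i (g i ω) := by
      funext ω
      congr 1
      simp only [hg, huX, huY, Pi.add_apply, Pi.smul_apply, smul_eq_mul]
      ring
    rw [hfun]
    exact eexp_eq (key i).1 (key i).2.1
  · set e : Fin m → ℝ := fun i => ∫ ω, (ℓ i (g i ω)).toReal ∂μ with he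
    have c0mem : a • (x0 - eX) + b • (x0 - eY) ∈ C := hCco hCX hCY ha0.le hb0.le hab
    refine hCup (Set.mem_add.2 ⟨a • (x0 - eX) + b • (x0 - eY), c0mem,
      fun i => (a * eX i + b * eY i) - e i, fun i => ?_, ?_⟩)
    · have := (key i).2.2
      simp only [he]
      linarith
    · funext i
      simp only [Pi.add_apply, Pi.smul_apply, Pi.sub_apply, smul_eq_mul]
      have : a * (x0 i - eX i) + b * (x0 i - eY i) + (a * eX i + b * eY i - e i)
          = (a + b) * x0 i - e i := by ring
      rw [this, hab]
      ring
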